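/- The q-trinomial coefficients satisfy the identity q^{L+1-d} T(n+1, d-1, L) + T(n, d, L) = T(n-1, d-1, L) + q^d T(n-1, d, L) for all integers n, d and L ≥ 0. -/
import Mathlib


/- `qq` plays the role of the formal variable `q`, as an element of the
field of rational functions over `ℚ`. -/
noncomputable def qq : RatFunc ℚ := RatFunc.X

/-- `(q)_n = ∏_{i=1}^n (1 - q^i)`. -/
noncomputable def qp (n : ℕ) : RatFunc ℚ := ∏ i ∈ Finset.range n, (1 - qq ^ (i + 1))

/-- `(q)_n` for an integer index, declared to be `0` for negative `n`
(so that terms with a negative factorial index vanish upon division). -/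
noncomputable def qpz (n : ℤ) : RatFunc ℚ := if 0 ≤ n then qp n.toNat else 0

/-- The Andrews–Baxter `q`-trinomial coefficient
`T(n,d,L) = Σ_k q^{k(k+d-n)} (q)_L / ((q)_k (q)_{k+d} (q)_{L-2k-d})`,
where terms with a negative factorial index are zero.  (Any term with a
nonzero contribution has `k ≤ L`, so the range below suffices.) -/
noncomputable def qT (n d : ℤ) (L : ℕ) : RatFunc ℚ :=
  ∑ k ∈ Finset.range (L + 1),
    qq ^ ((k : ℤ) * ((k : ℤ) + d - n)) * qp L /
      (qp k * qpz ((k : ℤ) + d) * qpz ((L : ℤ) - 2 * k - d))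


lemma qq_ne_zero : qq ≠ 0 := RatFunc.X_ne_zero

lemma one_sub_qq_pow_ne (j : ℕ) : (1 : RatFunc ℚ) - qq ^ (j + 1) ≠ 0 := by
  rw [sub_ne_zero]
  intro h
  have h2 : (algebraMap (Polynomial ℚ) (RatFunc ℚ)) (Polynomial.X ^ (j+1)) =
      (algebraMap (Polynomial ℚ) (RatFunc ℚ)) 1 := by
    simpa [qq, RatFunc.algebraMap_X] using h.symm
  have h3 := RatFunc.algebraMap_injective ℚ h2
  have := congrArg Polynomial.natDegree h3
  simp [Polynomial.natDegree_X_pow] at this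

lemma one_sub_qq_zpow_ne (m : ℤ) (h : 1 ≤ m) : (1 : RatFunc ℚ) - qq ^ m ≠ 0 := by
  have h1 : qq ^ m = qq ^ ((m.toNat - 1) + 1) := by
    rw [← zpow_natCast]; congr 1; omega
  rw [h1]; exact one_sub_qq_pow_ne _

lemma qp_ne_zero (m : ℕ) : qp m ≠ 0 := by
  rw [qp]
  exact Finset.prod_ne_zero_iff.mpr fun i _ => one_sub_qq_pow_ne i

lemma qpz_ne_zero (m : ℤ) (h : 0 ≤ m) : qpz m ≠ 0 := by
  rw [qpz, if_pos h]; exact qp_ne_zero _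

lemma qpz_succ (m : ℤ) (h : 1 ≤ m) : qpz m = qpz (m - 1) * (1 - qq ^ m) := by
  rw [qpz, qpz, if_pos (by omega), if_pos (by omega)]
  have h1 : m.toNat = (m-1).toNat + 1 := by omega
  rw [h1, qp, Finset.prod_range_succ, ← qp]
  congr 2
  rw [← zpow_natCast]; congr 1; omega

lemma qpz_neg (m : ℤ) (h : m < 0) : qpz m = 0 := by rw [qpz, if_neg (by omega)]

/-- `q^{L+1-d} T(n+1,d-1,L) + T(n,d,L) = T(n-1,d-1,L) + q^d T(n-1,d,L)`. -/
theorem qT_pair_identity (n d : ℤ) (L : ℕ) :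
    qq ^ ((L : ℤ) + 1 - d) * qT (n + 1) (d - 1) L + qT n d L =
      qT (n - 1) (d - 1) L + qq ^ d * qT (n - 1) d L := by
  simp only [qT, Finset.mul_sum, ← Finset.sum_add_distrib]
  refine Finset.sum_congr rfl fun k _ => ?_
  rcases lt_trichotomy ((k : ℤ) + d) 0 with hc | hc | hc
  · -- k + d < 0 : everything vanishes
    rw [qpz_neg ((k:ℤ) + d) hc, qpz_neg ((k:ℤ) + (d-1)) (by omega)]
    simp
  · -- k + d = 0 : the (d-1) terms vanish
    rw [qpz_neg ((k:ℤ) + (d-1)) (by omega)]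
    have e3 : qq ^ d * qq ^ ((k:ℤ) * ((k:ℤ) + d - (n-1))) =
        qq ^ ((k:ℤ) * ((k:ℤ) + d - n)) := by
      rw [← zpow_add₀ qq_ne_zero]; congr 1; nlinarith [hc]
    simp only [← mul_div_assoc, ← mul_assoc, e3]
    simp
  · -- k + d ≥ 1
    rcases lt_trichotomy ((L : ℤ) - 2 * k - d) (-1) with he | he | he
    · rw [qpz_neg ((L:ℤ) - 2*k - d) (by omega), qpz_neg ((L:ℤ) - 2*k - (d-1)) (by omega)]
      simp
    · -- L - 2k - d = -1 : the d-terms vanish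
      rw [qpz_neg ((L:ℤ) - 2*k - d) (by omega)]
      have e1 : qq ^ ((L:ℤ) + 1 - d) * qq ^ ((k:ℤ) * ((k:ℤ) + (d-1) - (n+1))) =
          qq ^ ((k:ℤ) * ((k:ℤ) + (d-1) - (n-1))) := by
        rw [← zpow_add₀ qq_ne_zero]; congr 1; linear_combination he
      simp only [← mul_div_assoc, ← mul_assoc, e1]
      simp
    · -- generic case
      have h1 : qpz ((k:ℤ) + d) = qpz ((k:ℤ) + (d-1)) * (1 - qq ^ ((k:ℤ) + d)) := by
        rw [qpz_succ ((k:ℤ) + d) (by omega)]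
        congr 2
        ring
      have h2 : qpz ((L:ℤ) - 2*k - (d-1)) =
          qpz ((L:ℤ) - 2*k - d) * (1 - qq ^ ((L:ℤ) - 2*k - (d-1))) := by
        rw [qpz_succ ((L:ℤ) - 2*k - (d-1)) (by omega)]
        congr 2
        ring
      have e1 : qq ^ ((L:ℤ) + 1 - d) * qq ^ ((k:ℤ) * ((k:ℤ) + (d-1) - (n+1))) =
          qq ^ ((k:ℤ) * ((k:ℤ) + d - n)) * qq ^ ((L:ℤ) - 2*k - (d-1)) := by
        rw [← zpow_add₀ qq_ne_zero, ← zpow_add₀ qq_ne_zero]; congr 1; ring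
      have e2 : qq ^ ((k:ℤ) * ((k:ℤ) + (d-1) - (n-1))) =
          qq ^ ((k:ℤ) * ((k:ℤ) + d - n)) := by congr 1; ring
      have e3 : qq ^ d * qq ^ ((k:ℤ) * ((k:ℤ) + d - (n-1))) =
          qq ^ ((k:ℤ) * ((k:ℤ) + d - n)) * qq ^ ((k:ℤ) + d) := by
        rw [← zpow_add₀ qq_ne_zero, ← zpow_add₀ qq_ne_zero]; congr 1; ring
      rw [h1, h2]
      simp only [← mul_div_assoc, ← mul_assoc]
      rw [e1, e2, e3]
      have hA := qp_ne_zero k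
      have hB := qpz_ne_zero ((k:ℤ) + (d-1)) (by omega)
      have hC := qpz_ne_zero ((L:ℤ) - 2*k - d) (by omega)
      have hQ1 := one_sub_qq_zpow_ne ((k:ℤ) + d) (by omega)
      have hQ2 := one_sub_qq_zpow_ne ((L:ℤ) - 2*k - (d-1)) (by omega)
      field_simp
      ring
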